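/- For every nonnegative integer s and all 1 ≤ k ≤ n, [A^s]_{k,n} = (a_k/a_n)·(1/k!)·(d/dt)^n_{t=0}[ (φ^⟨s⟩(t))^k · ∏_{i=0}^{s-1} g(φ^⟨i⟩(t)) ], where the empty product (s = 0) equals 1. -/

import Mathlib

open PowerSeries Finset

noncomputable section

/-- Product of two infinite matrices of complex numbers (indexed by positive integers,
upper triangular): `[A·B]_{k,n} = ∑_{j=k}^{n} [A]_{k,j}·[B]_{j,n}`. -/
def triMul (A B : ℕ → ℕ → ℂ) : ℕ → ℕ → ℂ :=
  fun k n => ∑ j ∈ Finset.Icc k n, A k j * B j n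

/-- The identity matrix. -/
def triId : ℕ → ℕ → ℂ := fun k n => if k = n then 1 else 0

/-- Powers of a matrix: `A^0 = I`, `A^{s+1} = A^s · A`. -/
def triPow (A : ℕ → ℕ → ℂ) : ℕ → ℕ → ℕ → ℂ
  | 0 => triId
  | s + 1 => triMul (triPow A s) A

/-- Composition `F ∘ G` of formal power series (intended for `G` with zero
constant coefficient): the coefficient of `t^n` is `∑_{j=0}^{n} F_j · [t^n](G^j)`. -/
def psComp (F G : PowerSeries ℂ) : PowerSeries ℂ :=
  PowerSeries.mk fun n =>
    ∑ j ∈ Finset.range (n + 1), (PowerSeries.coeff j F) * (PowerSeries.coeff n (G ^ j))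

/-- Iterated composition: `φ^⟨0⟩ = t`, `φ^⟨s+1⟩ = φ^⟨s⟩ ∘ φ`. -/
def iterComp (φ : PowerSeries ℂ) : ℕ → PowerSeries ℂ
  | 0 => PowerSeries.X
  | s + 1 => psComp (iterComp φ s) φ

lemma coeff_psComp (F G : PowerSeries ℂ) (n : ℕ) :
    coeff n (psComp F G) =
      ∑ j ∈ Finset.range (n + 1), coeff j F * coeff n (G ^ j) := by
  simp [psComp]

lemma coeff_mul_zero_of_lt {u : PowerSeries ℂ} (v : PowerSeries ℂ) {k n : ℕ}
    (hu : ∀ i, i < k → coeff i u = 0) (h : n < k) : coeff n (u * v) = 0 := by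
  rw [coeff_mul]
  apply Finset.sum_eq_zero
  intro p hp
  rw [HasAntidiagonal.mem_antidiagonal] at hp
  rw [hu p.1 (by omega), zero_mul]

lemma coeff_pow_zero {φ : PowerSeries ℂ} (hφ : constantCoeff φ = 0) {j n : ℕ}
    (h : n < j) : coeff n (φ ^ j) = 0 := by
  obtain ⟨ψ, hψ⟩ := pow_dvd_pow_of_dvd (PowerSeries.X_dvd_iff.mpr hφ) j
  rw [hψ]
  apply coeff_mul_zero_of_lt _ _ h
  intro i hi
  rw [PowerSeries.coeff_X_pow]
  simp [Nat.ne_of_lt hi]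

lemma key (F φ g : PowerSeries ℂ) (hφ : constantCoeff φ = 0) (n : ℕ) :
    coeff n (psComp F φ * g) =
      ∑ j ∈ Finset.range (n + 1), coeff j F * coeff n (φ ^ j * g) := by
  rw [coeff_mul]
  simp only [coeff_psComp]
  have h1 : ∀ p ∈ antidiagonal n,
      (∑ j ∈ Finset.range (p.1 + 1), coeff j F * coeff p.1 (φ ^ j)) * coeff p.2 g
      = ∑ j ∈ Finset.range (n + 1), coeff j F * (coeff p.1 (φ ^ j) * coeff p.2 g) := by
    intro p hp
    rw [HasAntidiagonal.mem_antidiagonal] at hp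
    have hsub : Finset.range (p.1 + 1) ⊆ Finset.range (n + 1) :=
      Finset.range_subset_range.mpr (by omega)
    rw [Finset.sum_mul, Finset.sum_subset hsub]
    · exact Finset.sum_congr rfl fun j _ => by ring
    · intro j hj hj'
      simp only [Finset.mem_range] at hj hj'
      rw [coeff_pow_zero hφ (by omega), mul_zero, zero_mul]
  rw [Finset.sum_congr rfl h1, Finset.sum_comm]
  refine Finset.sum_congr rfl fun j _ => ?_
  rw [coeff_mul, Finset.mul_sum]

lemma psComp_mul (F G φ : PowerSeries ℂ) (hφ : constantCoeff φ = 0) :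
    psComp (F * G) φ = psComp F φ * psComp G φ := by
  ext n
  have hr : coeff n (psComp F φ * psComp G φ)
      = ∑ p ∈ Finset.range (n + 1) ×ˢ Finset.range (n + 1),
          coeff p.1 F * coeff p.2 G * coeff n (φ ^ (p.1 + p.2)) := by
    rw [key F φ _ hφ n]
    have h1 : ∀ j ∈ Finset.range (n + 1),
        coeff j F * coeff n (φ ^ j * psComp G φ)
        = ∑ b ∈ Finset.range (n + 1),
            coeff j F * coeff b G * coeff n (φ ^ (j + b)) := by
      intro j _
      rw [mul_comm (φ ^ j), key G φ _ hφ n, Finset.mul_sum]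
      refine Finset.sum_congr rfl fun b _ => ?_
      rw [show φ ^ b * φ ^ j = φ ^ (j + b) by rw [← pow_add, add_comm]]
      ring
    rw [Finset.sum_congr rfl h1, ← Finset.sum_product']
  rw [hr]
  have h2 : ∑ p ∈ Finset.range (n + 1) ×ˢ Finset.range (n + 1),
        coeff p.1 F * coeff p.2 G * coeff n (φ ^ (p.1 + p.2))
      = ∑ p ∈ (Finset.range (n + 1) ×ˢ Finset.range (n + 1)).filter
            (fun p => p.1 + p.2 ≤ n),
          coeff p.1 F * coeff p.2 G * coeff n (φ ^ (p.1 + p.2)) := by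
    rw [Finset.sum_filter_of_ne]
    intro p _ hne
    by_contra hgt
    exact hne (by rw [coeff_pow_zero hφ (by omega), mul_zero])
  rw [h2]
  have hmaps : ∀ p ∈ (Finset.range (n + 1) ×ˢ Finset.range (n + 1)).filter
      (fun p => p.1 + p.2 ≤ n), p.1 + p.2 ∈ Finset.range (n + 1) := by
    intro p hp
    simp only [Finset.mem_filter] at hp
    simp [Nat.lt_succ_of_le hp.2]
  rw [← Finset.sum_fiberwise_of_maps_to hmaps, coeff_psComp]
  refine Finset.sum_congr rfl fun m hm => ?_
  rw [Finset.mem_range] at hm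
  have hset : ((Finset.range (n + 1) ×ˢ Finset.range (n + 1)).filter
        (fun p => p.1 + p.2 ≤ n)).filter (fun p => p.1 + p.2 = m)
      = antidiagonal m := by
    ext p
    simp only [Finset.mem_filter, Finset.mem_product, Finset.mem_range,
      HasAntidiagonal.mem_antidiagonal]
    omega
  rw [hset, coeff_mul, Finset.sum_mul]
  refine Finset.sum_congr rfl fun p hp => ?_
  rw [HasAntidiagonal.mem_antidiagonal] at hp
  rw [hp]

lemma psComp_one (φ : PowerSeries ℂ) : psComp 1 φ = 1 := by
  ext n
  rw [coeff_psComp]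
  rw [Finset.sum_eq_single 0]
  · simp
  · intro j _ hj
    rw [PowerSeries.coeff_one, if_neg hj, zero_mul]
  · simp

lemma psComp_pow (F φ : PowerSeries ℂ) (hφ : constantCoeff φ = 0) (m : ℕ) :
    psComp (F ^ m) φ = (psComp F φ) ^ m := by
  induction m with
  | zero => simpa using psComp_one φ
  | succ m ih => rw [pow_succ, psComp_mul _ _ _ hφ, ih, pow_succ]

lemma psComp_X_right (F : PowerSeries ℂ) : psComp F PowerSeries.X = F := by
  ext n
  rw [coeff_psComp, Finset.sum_eq_single n]
  · rw [PowerSeries.coeff_X_pow, if_pos rfl, mul_one]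
  · intro j _ hj
    rw [PowerSeries.coeff_X_pow, if_neg (fun h => hj h.symm), mul_zero]
  · simp

lemma constantCoeff_psComp (F G : PowerSeries ℂ) :
    constantCoeff (psComp F G) = constantCoeff F := by
  rw [← coeff_zero_eq_constantCoeff_apply, ← coeff_zero_eq_constantCoeff_apply,
    coeff_psComp]
  simp

lemma constantCoeff_iterComp (φ : PowerSeries ℂ) (s : ℕ) :
    constantCoeff (iterComp φ s) = 0 := by
  induction s with
  | zero => simp [iterComp]
  | succ s ih => rw [iterComp, constantCoeff_psComp, ih]

lemma psComp_assoc (F G φ : PowerSeries ℂ) (hG : constantCoeff G = 0)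
    (hφ : constantCoeff φ = 0) :
    psComp F (psComp G φ) = psComp (psComp F G) φ := by
  ext n
  rw [coeff_psComp, coeff_psComp]
  have h1 : ∀ j ∈ Finset.range (n + 1),
      coeff j F * coeff n ((psComp G φ) ^ j)
      = ∑ m ∈ Finset.range (n + 1),
          coeff j F * (coeff m (G ^ j) * coeff n (φ ^ m)) := by
    intro j _
    rw [← psComp_pow _ _ hφ, coeff_psComp, Finset.mul_sum]
  have h2 : ∀ m ∈ Finset.range (n + 1),
      coeff m (psComp F G) * coeff n (φ ^ m)
      = ∑ j ∈ Finset.range (n + 1),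
          coeff j F * (coeff m (G ^ j) * coeff n (φ ^ m)) := by
    intro m hm
    rw [Finset.mem_range] at hm
    rw [coeff_psComp, Finset.sum_mul]
    have hsub : Finset.range (m + 1) ⊆ Finset.range (n + 1) :=
      Finset.range_subset_range.mpr (by omega)
    rw [Finset.sum_subset hsub]
    · exact Finset.sum_congr rfl fun j _ => by ring
    · intro j hj hj'
      simp only [Finset.mem_range] at hj hj'
      rw [coeff_pow_zero hG (by omega), mul_zero, zero_mul]
  rw [Finset.sum_congr rfl h1, Finset.sum_congr rfl h2, Finset.sum_comm]

lemma psComp_prod (φ : PowerSeries ℂ) (hφ : constantCoeff φ = 0)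
    (s : ℕ) (f : ℕ → PowerSeries ℂ) :
    psComp (∏ i ∈ Finset.range s, f i) φ = ∏ i ∈ Finset.range s, psComp (f i) φ := by
  induction s with
  | zero => simpa using psComp_one φ
  | succ s ih =>
      rw [Finset.prod_range_succ, psComp_mul _ _ _ hφ, ih, Finset.prod_range_succ]

lemma series_step (φ g : PowerSeries ℂ) (hφ : constantCoeff φ = 0) (k s : ℕ) :
    psComp ((iterComp φ s) ^ k * ∏ i ∈ Finset.range s, psComp g (iterComp φ i)) φ * g
      = (iterComp φ (s + 1)) ^ k * ∏ i ∈ Finset.range (s + 1), psComp g (iterComp φ i) := by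
  rw [psComp_mul _ _ _ hφ, psComp_pow _ _ hφ, psComp_prod _ hφ, mul_assoc]
  congr 1
  rw [Finset.prod_range_succ']
  congr 1
  · refine Finset.prod_congr rfl fun i _ => ?_
    rw [← psComp_assoc g _ φ (constantCoeff_iterComp φ i) hφ]
    rfl
  · show g = psComp g (iterComp φ 0)
    rw [show iterComp φ 0 = PowerSeries.X from rfl, psComp_X_right]

/-- Corollary (h = 1): the `s`-th power of the matrix with entries
`[A]_{k,n} = (a_k/a_n)·(1/k!)·(d/dt)^n_{t=0}[φ(t)^k·g(t)]` has entries
`[A^s]_{k,n} = (a_k/a_n)·(1/k!)·(d/dt)^n_{t=0}[(φ^⟨s⟩(t))^k·∏_{i=0}^{s-1} g(φ^⟨i⟩(t))]`. -/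
theorem stmt5 (a : ℕ → ℂ) (ha : ∀ n, 1 ≤ n → a n ≠ 0)
    (φ g : PowerSeries ℂ)
    (hφ0 : constantCoeff φ = 0)
    (A : ℕ → ℕ → ℂ)
    (hAtri : ∀ k n, n < k → A k n = 0)
    (hA : ∀ k n, 1 ≤ k → k ≤ n →
      A k n = a k / a n * (1 / k.factorial) *
        ((n.factorial : ℂ) * coeff n (φ ^ k * g)))
    (s : ℕ) (k n : ℕ) (hk : 1 ≤ k) (hkn : k ≤ n) :
    triPow A s k n = a k / a n * (1 / k.factorial) *
      ((n.factorial : ℂ) * coeff n ((iterComp φ s) ^ k *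
        ∏ i ∈ Finset.range s, psComp g (iterComp φ i))) := by
  induction s generalizing k n with
  | zero =>
      have hX : iterComp φ 0 = PowerSeries.X := rfl
      rw [show triPow A 0 = triId from rfl, hX]
      simp only [Finset.range_zero, Finset.prod_empty, mul_one,
        PowerSeries.coeff_X_pow]
      by_cases h : k = n
      · subst h
        simp only [triId, if_pos rfl, div_self (ha k hk)]
        have : ((k.factorial : ℂ)) ≠ 0 := Nat.cast_ne_zero.mpr k.factorial_ne_zero
        field_simp
      · have h2 : ¬(n = k) := fun h' => h h'.symm
        simp only [triId, if_neg h, if_neg h2]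
        ring
  | succ s ih =>
      have hne_an : a n ≠ 0 := ha n (le_trans hk hkn)
      have hkfac : ((k.factorial : ℂ)) ≠ 0 := Nat.cast_ne_zero.mpr k.factorial_ne_zero
      set R : PowerSeries ℂ :=
        (iterComp φ s) ^ k * ∏ i ∈ Finset.range s, psComp g (iterComp φ i) with hR
      have hstep : ∀ j ∈ Finset.Icc k n,
          triPow A s k j * A j n
          = a k / a n * (1 / k.factorial) * (n.factorial : ℂ) *
              (coeff j R * coeff n (φ ^ j * g)) := by
        intro j hj
        rw [Finset.mem_Icc] at hj
        have hj1 : 1 ≤ j := le_trans hk hj.1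
        rw [ih k j hk hj.1, hA j n hj1 hj.2]
        have haj : a j ≠ 0 := ha j hj1
        have hjf : ((j.factorial : ℂ)) ≠ 0 := Nat.cast_ne_zero.mpr j.factorial_ne_zero
        field_simp
        ring
      rw [show triPow A (s + 1) k n = triMul (triPow A s) A k n from rfl, triMul,
        Finset.sum_congr rfl hstep, ← Finset.mul_sum]
      have hext : ∑ j ∈ Finset.Icc k n, coeff j R * coeff n (φ ^ j * g)
          = ∑ j ∈ Finset.range (n + 1), coeff j R * coeff n (φ ^ j * g) := by
        apply Finset.sum_subset
        · intro j hj
          rw [Finset.mem_Icc] at hj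
          rw [Finset.mem_range]
          omega
        · intro j hj hj'
          rw [Finset.mem_range] at hj
          rw [Finset.mem_Icc] at hj'
          have hjk : j < k := by omega
          have hCj : coeff j R = 0 := by
            apply coeff_mul_zero_of_lt _ _ hjk
            intro i hi
            exact coeff_pow_zero (constantCoeff_iterComp φ s) hi
          rw [hCj, zero_mul]
      rw [hext, ← key R φ g hφ0 n, hR, series_step φ g hφ0 k s]
      ring
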